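/- Let X be a Banach space with two closed linear subspaces λ and μ. Then λ ∼^{sc} μ holds if and only if there exist closed subspaces λ₁ of λ and μ₁ of μ and a compact linear operator K₁ ∈ B(X) such that dim(λ/λ₁) < +∞ and (I+K₁)λ₁ = μ₁. Moreover, λ₁, μ₁ and K₁ can be chosen so that I+K₁ : X → X is a bounded linear isomorphism and I+K₁ restricts to a linear isomorphism from λ₁ onto μ₁. -/

import Mathlib

open scoped Classical

/-- `μ` is a right semi-compact perturbation of `λ` (written `λ ∼^{sc} μ`):
there is a compact operator `K ∈ B(X)` with `(I + K)λ ⊆ μ`. -/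
def SCPerturb {X : Type*} [NormedAddCommGroup X] [NormedSpace ℂ X]
    (lam mu : Submodule ℂ X) : Prop :=
  ∃ K : X →L[ℂ] X, IsCompactOperator ⇑K ∧
    Submodule.map ((1 + K : X →L[ℂ] X) : X →ₗ[ℂ] X) lam ≤ mu

/-- Dimension of a module valued in `ℤ ∪ {±∞}`: the finrank if finite
dimensional, `+∞` otherwise. -/
noncomputable def edimE (V : Type*) [AddCommGroup V] [Module ℂ V] : EReal :=
  if FiniteDimensional ℂ V then ((Module.finrank ℂ V : ℝ) : EReal) else ⊤

/-- The index of `I + K : λ → μ`, i.e.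
`dim ker((I+K)|_λ) − dim(μ/(I+K)λ)`, valued in `ℤ ∪ {−∞}` (it equals `−∞`
when `dim(μ/(I+K)λ)` is infinite). -/
noncomputable def relIndexWith {X : Type*} [NormedAddCommGroup X] [NormedSpace ℂ X]
    (lam mu : Submodule ℂ X) (K : X →L[ℂ] X) : EReal :=
  edimE ↥(lam ⊓ LinearMap.ker ((1 + K : X →L[ℂ] X) : X →ₗ[ℂ] X)) -
    edimE (↥mu ⧸ (Submodule.map ((1 + K : X →L[ℂ] X) : X →ₗ[ℂ] X) lam).comap mu.subtype)

/-- The relative dimension `[λ − μ]`, defined via any compact witness of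
`λ ∼^{sc} μ`, or as `−[μ − λ]` (in particular `+∞` when `[μ−λ] = −∞`) if only
`μ ∼^{sc} λ` holds. -/
noncomputable def relDim {X : Type*} [NormedAddCommGroup X] [NormedSpace ℂ X]
    (lam mu : Submodule ℂ X) : EReal :=
  if h : SCPerturb lam mu then relIndexWith lam mu h.choose
  else if h' : SCPerturb mu lam then -relIndexWith mu lam h'.choose
  else 0

/-- `μ` is a compact perturbation of `λ` (written `λ ∼^{c} μ`): there is a
compact operator `K` with `(I+K)λ ⊆ μ` and `I + K : λ → μ` Fredholm. -/
def CPerturb {X : Type*} [NormedAddCommGroup X] [NormedSpace ℂ X]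
    (lam mu : Submodule ℂ X) : Prop :=
  ∃ K : X →L[ℂ] X, IsCompactOperator ⇑K ∧
    Submodule.map ((1 + K : X →L[ℂ] X) : X →ₗ[ℂ] X) lam ≤ mu ∧
    FiniteDimensional ℂ ↥(lam ⊓ LinearMap.ker ((1 + K : X →L[ℂ] X) : X →ₗ[ℂ] X)) ∧
    FiniteDimensional ℂ
      (↥mu ⧸ (Submodule.map ((1 + K : X →L[ℂ] X) : X →ₗ[ℂ] X) lam).comap mu.subtype)

section Aux

variable {X : Type*} [NormedAddCommGroup X] [NormedSpace ℂ X]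


/-- A continuous linear map factoring through a finite dimensional space is compact. -/
lemma aux_compact_of_factor {V : Type*} [NormedAddCommGroup V] [NormedSpace ℂ V]
    [FiniteDimensional ℂ V] (u : V →L[ℂ] X) (v : X →L[ℂ] V) :
    IsCompactOperator ⇑(u.comp v) := by
  have hv : IsCompactOperator ⇑v := by
    refine ⟨Metric.closedBall 0 (‖v‖ + 1), ?_, ?_⟩
    · haveI : ProperSpace V := FiniteDimensional.proper ℂ V
      exact isCompact_closedBall _ _
    · filter_upwards [Metric.closedBall_mem_nhds (0 : X) one_pos] with x hx
      simp only [Set.mem_preimage, Metric.mem_closedBall, dist_zero_right] at *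
      calc ‖v x‖ ≤ ‖v‖ * ‖x‖ := v.le_opNorm x
        _ ≤ ‖v‖ * 1 := by gcongr
        _ ≤ ‖v‖ + 1 := by linarith [v.opNorm_nonneg]
  have := hv.continuous_comp u.continuous
  exact this

/-- Kernel of `1 + C` with `C` compact is finite dimensional. -/
lemma aux_ker_findim [CompleteSpace X] {C : X →L[ℂ] X} (hC : IsCompactOperator ⇑C) :
    FiniteDimensional ℂ ↥(LinearMap.ker ((1 + C : X →L[ℂ] X) : X →ₗ[ℂ] X)) := by
  set B : X →L[ℂ] X := 1 + C with hB
  set N := LinearMap.ker (B : X →ₗ[ℂ] X) with hN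
  obtain ⟨S, hS, hSsub⟩ := hC.image_closedBall_subset_compact (𝕜₁ := ℂ) 1
  have hkey : (Subtype.val '' Metric.closedBall (0 : ↥N) 1) ⊆
      ((fun y => -y) '' S) ∩ (N : Set X) := by
    rintro _ ⟨⟨x, hx⟩, hx1, rfl⟩
    refine ⟨?_, hx⟩
    have hx' : x + C x = 0 := by
      have := (LinearMap.mem_ker).mp hx
      simpa [hB] using this
    have : x = -(C x) := eq_neg_of_add_eq_zero_left hx'
    refine ⟨C x, hSsub ⟨x, ?_, rfl⟩, this.symm⟩
    simpa [Metric.mem_closedBall, dist_zero_right] using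
      (by simpa [Metric.mem_closedBall, dist_zero_right] using hx1 : ‖x‖ ≤ 1)
  have hNc : IsClosed (N : Set X) := ContinuousLinearMap.isClosed_ker B
  have hTc : IsCompact (((fun y : X => -y) '' S) ∩ (N : Set X)) :=
    (hS.image continuous_neg).inter_right hNc
  have hcomp : IsCompact (Metric.closedBall (0 : ↥N) 1) := by
    rw [Subtype.isCompact_iff]
    have heq : (Subtype.val '' Metric.closedBall (0 : ↥N) 1)
        = (N : Set X) ∩ Metric.closedBall 0 1 := by
      ext x
      constructor
      · rintro ⟨⟨y, hy⟩, hy1, rfl⟩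
        exact ⟨hy, by simpa [Metric.mem_closedBall, dist_zero_right] using hy1⟩
      · rintro ⟨hx, hx1⟩
        exact ⟨⟨x, hx⟩, by simpa [Metric.mem_closedBall, dist_zero_right] using hx1, rfl⟩
    refine hTc.of_isClosed_subset ?_ hkey
    rw [heq]
    exact hNc.inter Metric.isClosed_closedBall
  exact FiniteDimensional.of_isCompact_closedBall₀ ℂ one_pos hcomp

/-- A compact operator maps a bounded sequence to one with two close values. -/
lemma aux_two_close {C : X →L[ℂ] X} (hC : IsCompactOperator ⇑C) (u : ℕ → X)
    (hu : ∀ n, ‖u n‖ ≤ 1) : ∃ m n, m < n ∧ ‖C (u n) - C (u m)‖ < 1 / 2 := by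
  obtain ⟨S, hS, hSsub⟩ := hC.image_closedBall_subset_compact (𝕜₁ := ℂ) 1
  have hmem : ∀ n, C (u n) ∈ S := fun n =>
    hSsub ⟨u n, by simpa [Metric.mem_closedBall, dist_zero_right] using hu n, rfl⟩
  obtain ⟨L, -, φ, hφ, hconv⟩ := hS.tendsto_subseq hmem
  have := Metric.tendsto_atTop.mp hconv (1 / 4) (by norm_num)
  obtain ⟨Nn, hNn⟩ := this
  refine ⟨φ Nn, φ (Nn + 1), hφ (Nn.lt_succ_self), ?_⟩
  have h1 := hNn Nn le_rfl
  have h2 := hNn (Nn + 1) (Nn.le_succ)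
  calc ‖C (u (φ (Nn + 1))) - C (u (φ Nn))‖
      = dist (C (u (φ (Nn + 1)))) (C (u (φ Nn))) := (dist_eq_norm _ _).symm
    _ ≤ dist (C (u (φ (Nn + 1)))) L + dist (C (u (φ Nn))) L := dist_triangle_right _ _ _
    _ < 1 / 4 + 1 / 4 := by exact add_lt_add h2 h1
    _ = 1 / 2 := by norm_num

/-- Riesz-type step: pick a unit vector in `G` at distance `≥ 1/2` from `H`. -/
lemma aux_riesz_step {G H : Submodule ℂ X} (hHc : IsClosed (H : Set X)) (hHG : H ≤ G)
    {x : X} (hxG : x ∈ G) (hxH : x ∉ H) :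
    ∃ u, u ∈ G ∧ ‖u‖ = 1 ∧ ∀ y ∈ H, (1 / 2 : ℝ) ≤ ‖u - y‖ := by
  set H' : Submodule ℂ ↥G := H.comap G.subtype with hH'
  have hH'c : IsClosed (H' : Set ↥G) := hHc.preimage continuous_subtype_val
  have hx' : (⟨x, hxG⟩ : ↥G) ∉ H' := by simpa [hH'] using hxH
  obtain ⟨x₀, hx₀, hx₀d⟩ := riesz_lemma hH'c ⟨_, hx'⟩ (show (1/2 : ℝ) < 1 by norm_num)
  have hx₀ne : x₀ ≠ 0 := fun h => hx₀ (h ▸ H'.zero_mem)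
  have hnorm : ‖x₀‖ ≠ 0 := by simpa using hx₀ne
  refine ⟨(‖x₀‖⁻¹ : ℂ) • (x₀ : X), G.smul_mem _ x₀.2, ?_, ?_⟩
  · rw [norm_smul]; simp only [norm_inv, Complex.norm_real, Real.norm_eq_abs, abs_norm]
    exact inv_mul_cancel₀ hnorm
  · intro y hy
    have hyG : y ∈ G := hHG hy
    have hyH' : ((‖x₀‖ : ℂ) • ⟨y, hyG⟩ : ↥G) ∈ H' := H'.smul_mem _ (by simpa [hH'] using hy)
    have := hx₀d _ hyH'
    have hns : ‖x₀ - (‖x₀‖ : ℂ) • ⟨y, hyG⟩‖ = ‖(x₀ : X) - (‖x₀‖ : ℂ) • y‖ := rfl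
    rw [hns] at this
    have hpos : (0:ℝ) < ‖x₀‖ := lt_of_le_of_ne (norm_nonneg _) (Ne.symm hnorm)
    have : (1/2 : ℝ) * ‖x₀‖ ≤ ‖(x₀ : X) - (‖x₀‖ : ℂ) • y‖ := by
      simpa using this
    calc (1/2 : ℝ) = ‖x₀‖⁻¹ * ((1/2) * ‖x₀‖) := by
          rw [mul_comm (1/2:ℝ) ‖x₀‖, ← mul_assoc, inv_mul_cancel₀ hnorm, one_mul]
      _ ≤ ‖x₀‖⁻¹ * ‖(x₀ : X) - (‖x₀‖ : ℂ) • y‖ := by gcongr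
      _ = ‖(‖x₀‖⁻¹ : ℂ) • ((x₀ : X) - (‖x₀‖ : ℂ) • y)‖ := by
          rw [norm_smul]
          simp only [norm_inv, Complex.norm_real, Real.norm_eq_abs, abs_norm]
      _ = ‖(‖x₀‖⁻¹ : ℂ) • (x₀ : X) - y‖ := by
          rw [smul_sub, smul_smul]
          congr 2
          rw [inv_mul_cancel₀ (by exact_mod_cast hnorm), one_smul]

open ContinuousLinearMap in
/-- Fredholm alternative, half 1: if `1 + C` is injective, it is surjective. -/
lemma aux_inj_surj [CompleteSpace X] {C : X →L[ℂ] X} (hC : IsCompactOperator ⇑C)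
    (hinj : Function.Injective ⇑(1 + C : X →L[ℂ] X)) :
    Function.Surjective ⇑(1 + C : X →L[ℂ] X) := by
  set B : X →L[ℂ] X := 1 + C with hBdef
  have hCB : ∀ x, C x = B x - x := by intro x; simp [hBdef]
  -- bounded below
  have hbb : ∃ c : ℝ, 0 < c ∧ ∀ x, c * ‖x‖ ≤ ‖B x‖ := by
    by_contra hcon
    push_neg at hcon
    have hseq : ∀ n : ℕ, ∃ u : X, ‖u‖ = 1 ∧ ‖B u‖ < ((n : ℝ) + 1)⁻¹ := by
      intro n
      obtain ⟨x, hx⟩ := hcon ((n : ℝ) + 1)⁻¹ (by positivity)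
      have hxne : x ≠ 0 := by
        rintro rfl; simp at hx
      have hn : ‖x‖ ≠ 0 := by simpa using hxne
      refine ⟨(‖x‖⁻¹ : ℂ) • x, ?_, ?_⟩
      · rw [norm_smul]; simp only [norm_inv, Complex.norm_real, Real.norm_eq_abs, abs_norm]
        exact inv_mul_cancel₀ hn
      · rw [map_smul, norm_smul]
        simp only [norm_inv, Complex.norm_real, Real.norm_eq_abs, abs_norm]
        rw [inv_mul_lt_iff₀ (lt_of_le_of_ne (norm_nonneg x) (Ne.symm hn))]
        calc ‖B x‖ < ((n:ℝ)+1)⁻¹ * ‖x‖ := hx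
          _ = ‖x‖ * ((n:ℝ)+1)⁻¹ := by ring
    choose u hu1 hu2 using hseq
    obtain ⟨S, hS, hSsub⟩ := hC.image_closedBall_subset_compact (𝕜₁ := ℂ) 1
    have hmem : ∀ n, C (u n) ∈ S := fun n =>
      hSsub ⟨u n, by simp [Metric.mem_closedBall, dist_zero_right, (hu1 n).le], rfl⟩
    obtain ⟨y, -, φ, hφ, hconv⟩ := hS.tendsto_subseq hmem
    have hBto : Filter.Tendsto (fun n => B (u (φ n))) Filter.atTop (nhds 0) := by
      rw [Metric.tendsto_atTop]
      intro ε hε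
      obtain ⟨N, hN⟩ := exists_nat_gt ε⁻¹
      refine ⟨N, fun n hn => ?_⟩
      rw [dist_zero_right]
      calc ‖B (u (φ n))‖ < ((φ n : ℝ) + 1)⁻¹ := hu2 (φ n)
        _ ≤ ((n : ℝ) + 1)⁻¹ := by gcongr <;> exact_mod_cast hφ.le_apply
        _ ≤ ((N : ℝ) + 1)⁻¹ := by gcongr <;> exact_mod_cast hn
        _ < ε := by
            rw [inv_lt_comm₀ (by positivity) hε]
            calc ε⁻¹ < N := hN
              _ < (N : ℝ) + 1 := by linarith
    have huto : Filter.Tendsto (fun n => u (φ n)) Filter.atTop (nhds (-y)) := by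
      have h2 : Filter.Tendsto (fun n => B (u (φ n)) - C (u (φ n))) Filter.atTop
          (nhds (0 - y)) := hBto.sub hconv
      rw [zero_sub] at h2
      refine h2.congr fun n => ?_
      rw [hCB]; abel
    have hBy : B (-y) = 0 := by
      have h1 : Filter.Tendsto (fun n => B (u (φ n))) Filter.atTop (nhds (B (-y))) :=
        (B.continuous.tendsto _).comp huto
      exact tendsto_nhds_unique h1 hBto
    have hy0 : -y = 0 := hinj (by simpa using hBy)
    have : Filter.Tendsto (fun n => ‖u (φ n)‖) Filter.atTop (nhds ‖-y‖) :=
      (continuous_norm.tendsto _).comp huto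
    simp_rw [hu1] at this
    have := tendsto_nhds_unique this tendsto_const_nhds
    rw [hy0] at this
    simp at this
  obtain ⟨c, hc, hcb⟩ := hbb
  -- powers bounded below, injective, closed range
  have hpow : ∀ (n : ℕ) (x : X), c ^ n * ‖x‖ ≤ ‖(B ^ n) x‖ := by
    intro n
    induction n with
    | zero => intro x; simp
    | succ n ih =>
      intro x
      have hstep : (B ^ (n+1)) x = (B ^ n) (B x) := by
        rw [pow_succ B n]; rfl
      rw [hstep]
      calc c ^ (n+1) * ‖x‖ = c ^ n * (c * ‖x‖) := by ring
        _ ≤ c ^ n * ‖B x‖ := by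
            have := hcb x
            have hcn : (0:ℝ) ≤ c ^ n := by positivity
            nlinarith
        _ ≤ ‖(B ^ n) (B x)‖ := ih (B x)
  have hinjn : ∀ n : ℕ, Function.Injective ⇑(B ^ n) := by
    intro n
    induction n with
    | zero => intro x y h; simpa using h
    | succ n ih =>
      intro x y h
      simp only [pow_succ, ContinuousLinearMap.mul_apply] at h
      exact hinj (ih h)
  have hclosed : ∀ n : ℕ, IsClosed ((LinearMap.range ((B ^ n : X →L[ℂ] X) : X →ₗ[ℂ] X) : Submodule ℂ X) : Set X) := by
    intro n
    have hanti : AntilipschitzWith ⟨(c ^ n)⁻¹, by positivity⟩ ⇑(B ^ n) := by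
      apply ContinuousLinearMap.antilipschitz_of_bound
      intro x
      have := hpow n x
      show ‖x‖ ≤ (c ^ n)⁻¹ * ‖(B ^ n) x‖
      rw [le_inv_mul_iff₀ (by positivity)]
      linarith
    have := hanti.isClosed_range (B ^ n).uniformContinuous
    convert this using 1
    rfl
  have hmono : ∀ m n : ℕ, m ≤ n →
      LinearMap.range ((B ^ n : X →L[ℂ] X) : X →ₗ[ℂ] X) ≤ LinearMap.range ((B ^ m : X →L[ℂ] X) : X →ₗ[ℂ] X) := by
    intro m n hmn
    obtain ⟨k, rfl⟩ := Nat.exists_eq_add_of_le hmn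
    rintro _ ⟨x, rfl⟩
    exact ⟨(B ^ k) x, by simp only [ContinuousLinearMap.coe_coe]; rw [pow_add, ContinuousLinearMap.mul_apply]⟩
  -- conclude
  by_contra hsurj
  have hy0 : ∃ y₀, y₀ ∉ LinearMap.range (B : X →ₗ[ℂ] X) := by
    simp only [Function.Surjective, not_forall] at hsurj
    obtain ⟨y₀, hy₀⟩ := hsurj
    exact ⟨y₀, fun ⟨x, hx⟩ => hy₀ ⟨x, hx⟩⟩
  obtain ⟨y₀, hy₀⟩ := hy0
  have hstrict : ∀ n : ℕ, (B ^ n) y₀ ∈ LinearMap.range ((B ^ n : X →L[ℂ] X) : X →ₗ[ℂ] X) ∧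
      (B ^ n) y₀ ∉ LinearMap.range ((B ^ (n+1) : X →L[ℂ] X) : X →ₗ[ℂ] X) := by
    intro n
    refine ⟨⟨y₀, rfl⟩, ?_⟩
    rintro ⟨z, hz⟩
    have hz' : (B ^ n) (B z) = (B ^ n) y₀ := by
      rw [← hz, pow_succ B n]; rfl
    exact hy₀ ⟨z, hinjn n hz'⟩
  have hEx : ∀ n : ℕ, ∃ u, u ∈ LinearMap.range ((B ^ n : X →L[ℂ] X) : X →ₗ[ℂ] X) ∧ ‖u‖ = 1 ∧
      ∀ y ∈ LinearMap.range ((B ^ (n+1) : X →L[ℂ] X) : X →ₗ[ℂ] X), (1/2 : ℝ) ≤ ‖u - y‖ := by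
    intro n
    obtain ⟨h1, h2⟩ := hstrict n
    exact aux_riesz_step (hclosed (n+1)) (hmono n (n+1) (Nat.le_succ n)) h1 h2
  choose u hu1 hu2 hu3 using hEx
  obtain ⟨m, n, hmn, hlt⟩ := aux_two_close hC u (fun n => (hu2 n).le)
  have hBmem : ∀ k, B (u k) ∈ LinearMap.range ((B ^ (k+1) : X →L[ℂ] X) : X →ₗ[ℂ] X) := by
    intro k
    obtain ⟨w, hw⟩ := hu1 k
    exact ⟨w, by simp only [ContinuousLinearMap.coe_coe] at hw ⊢; rw [pow_succ' B k, ContinuousLinearMap.mul_apply, hw]⟩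
  have hz : B (u m) - B (u n) + u n ∈ LinearMap.range ((B ^ (m+1) : X →L[ℂ] X) : X →ₗ[ℂ] X) := by
    refine Submodule.add_mem _ (Submodule.sub_mem _ (hBmem m) ?_) ?_
    · exact hmono (m+1) (n+1) (Nat.succ_le_succ hmn.le) (hBmem n)
    · exact hmono (m+1) n hmn (hu1 n)
  have hkey : C (u n) - C (u m) = u m - (B (u m) - B (u n) + u n) := by
    rw [hCB, hCB]; abel
  have := hu3 m _ hz
  rw [← hkey] at this
  linarith

open ContinuousLinearMap in
/-- Fredholm alternative, half 2: if `1 + C` is surjective, it is injective. -/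
lemma aux_surj_inj {C : X →L[ℂ] X} (hC : IsCompactOperator ⇑C)
    (hsurj : Function.Surjective ⇑(1 + C : X →L[ℂ] X)) :
    Function.Injective ⇑(1 + C : X →L[ℂ] X) := by
  set B : X →L[ℂ] X := 1 + C with hBdef
  have hCB : ∀ x, C x = B x - x := by intro x; simp [hBdef]
  by_contra hinj
  have hv : ∃ v : X, v ≠ 0 ∧ B v = 0 := by
    simp only [Function.Injective, not_forall] at hinj
    obtain ⟨a, b, hab, hne⟩ := hinj
    exact ⟨a - b, sub_ne_zero.mpr hne, by rw [map_sub, hab, sub_self]⟩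
  obtain ⟨v, hvne, hv0⟩ := hv
  have hsurjn : ∀ n : ℕ, Function.Surjective ⇑(B ^ n) := by
    intro n
    induction n with
    | zero => intro x; exact ⟨x, by simp⟩
    | succ n ih =>
      intro x
      obtain ⟨y, hy⟩ := ih x
      obtain ⟨z, hz⟩ := hsurj y
      exact ⟨z, by rw [pow_succ B n, ContinuousLinearMap.mul_apply, hz, hy]⟩
  have hclosed : ∀ n : ℕ, IsClosed ((LinearMap.ker ((B ^ n : X →L[ℂ] X) : X →ₗ[ℂ] X) : Submodule ℂ X) : Set X) :=
    fun n => ContinuousLinearMap.isClosed_ker _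
  have hmono : ∀ m n : ℕ, m ≤ n → LinearMap.ker ((B ^ m : X →L[ℂ] X) : X →ₗ[ℂ] X) ≤ LinearMap.ker ((B ^ n : X →L[ℂ] X) : X →ₗ[ℂ] X) := by
    intro m n hmn x hx
    obtain ⟨k, rfl⟩ := Nat.exists_eq_add_of_le hmn
    rw [LinearMap.mem_ker] at hx ⊢; simp only [ContinuousLinearMap.coe_coe] at hx ⊢
    rw [show m + k = k + m from Nat.add_comm m k, pow_add, ContinuousLinearMap.mul_apply,
      hx, map_zero]
  have hstrict : ∀ n : ℕ, ∃ x, x ∈ LinearMap.ker ((B ^ (n+1) : X →L[ℂ] X) : X →ₗ[ℂ] X) ∧ x ∉ LinearMap.ker ((B ^ n : X →L[ℂ] X) : X →ₗ[ℂ] X) := by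
    intro n
    obtain ⟨x, hx⟩ := hsurjn n v
    refine ⟨x, ?_, ?_⟩
    · rw [LinearMap.mem_ker, ContinuousLinearMap.coe_coe, pow_succ' B n, ContinuousLinearMap.mul_apply, hx, hv0]
    · rw [LinearMap.mem_ker, ContinuousLinearMap.coe_coe, hx]
      exact hvne
  have hEx : ∀ n : ℕ, ∃ u, u ∈ LinearMap.ker ((B ^ (n+1) : X →L[ℂ] X) : X →ₗ[ℂ] X) ∧ ‖u‖ = 1 ∧
      ∀ y ∈ LinearMap.ker ((B ^ n : X →L[ℂ] X) : X →ₗ[ℂ] X), (1/2 : ℝ) ≤ ‖u - y‖ := by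
    intro n
    obtain ⟨x, h1, h2⟩ := hstrict n
    exact aux_riesz_step (hclosed n) (hmono n (n+1) (Nat.le_succ n)) h1 h2
  choose u hu1 hu2 hu3 using hEx
  obtain ⟨m, n, hmn, hlt⟩ := aux_two_close hC u (fun n => (hu2 n).le)
  have hBker : ∀ k, B (u k) ∈ LinearMap.ker ((B ^ (k+1) : X →L[ℂ] X) : X →ₗ[ℂ] X) := by
    intro k
    rw [LinearMap.mem_ker, ContinuousLinearMap.coe_coe, ← ContinuousLinearMap.mul_apply, ← pow_succ B (k+1)]
    have := hu1 k
    rw [LinearMap.mem_ker, ContinuousLinearMap.coe_coe] at this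
    rw [show k + 1 + 1 = 1 + (k + 1) from by ring, pow_add, ContinuousLinearMap.mul_apply,
      this, map_zero]
  have hz : B (u n) - B (u m) + u m ∈ LinearMap.ker ((B ^ n : X →L[ℂ] X) : X →ₗ[ℂ] X) := by
    refine Submodule.add_mem _ (Submodule.sub_mem _ ?_ ?_) ?_
    · have := hBker n
      -- B (u n) ∈ ker (B ^ (n+1)), need ker (B ^ n): B^n (B (u n)) = B^(n+1) (u n) = 0
      rw [LinearMap.mem_ker, ContinuousLinearMap.coe_coe, ← ContinuousLinearMap.mul_apply, ← pow_succ B n]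
      have h1 := hu1 n
      rw [LinearMap.mem_ker] at h1
      exact h1
    · exact hmono (m+1) n hmn (hBker m)
    · exact hmono (m+1) n hmn (hu1 m)
  have hkey : C (u m) - C (u n) = u n - (B (u n) - B (u m) + u m) := by
    rw [hCB, hCB]; abel
  have := hu3 n _ hz
  rw [← hkey] at this
  rw [norm_sub_rev] at hlt
  linarith

open Module in
/-- There is a compact perturbation making `1 + K` bijective, agreeing with `K` on a
closed finite-codimensional subspace. -/
lemma aux_bij [CompleteSpace X] {K : X →L[ℂ] X} (hK : IsCompactOperator ⇑K) :
    ∃ (K₁ : X →L[ℂ] X) (M : Submodule ℂ X), IsCompactOperator ⇑K₁ ∧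
      Function.Bijective ⇑(1 + K₁ : X →L[ℂ] X) ∧ IsClosed (M : Set X) ∧
      FiniteDimensional ℂ (X ⧸ M) ∧ ∀ x ∈ M, K₁ x = K x := by
  set A : X →L[ℂ] X := 1 + K with hAdef
  set N : Submodule ℂ X := LinearMap.ker (A : X →ₗ[ℂ] X) with hNdef
  haveI hNfd : FiniteDimensional ℂ ↥N := aux_ker_findim hK
  obtain ⟨π, hπ⟩ := Submodule.ClosedComplemented.of_finiteDimensional N
  set M : Submodule ℂ X := LinearMap.ker (π : X →ₗ[ℂ] ↥N) with hMdef
  have hMc : IsClosed (M : Set X) := ContinuousLinearMap.isClosed_ker π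
  haveI hMfd : FiniteDimensional ℂ (X ⧸ M) := by
    have hinj : Function.Injective (M.liftQ (π : X →ₗ[ℂ] ↥N) le_rfl) := by
      rw [← LinearMap.ker_eq_bot]
      exact Submodule.ker_liftQ_eq_bot _ _ _ le_rfl
    exact FiniteDimensional.of_injective _ hinj
  set R : Submodule ℂ X := LinearMap.range (A : X →ₗ[ℂ] X) with hRdef
  set n : ℕ := Module.finrank ℂ ↥N with hn
  set bN : Basis (Fin n) ℂ ↥N := Module.finBasis ℂ ↥N with hbN
  -- the key existence of n independent classes mod R
  have hcase : ∃ v : Fin n → X, LinearIndependent ℂ (fun j => R.mkQ (v j)) := by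
    have hrank : (n : Cardinal) ≤ Module.rank ℂ (X ⧸ R) := by
      by_contra hlt
      push_neg at hlt
      haveI hQfd : Module.Finite ℂ (X ⧸ R) :=
        Module.rank_lt_aleph0_iff.mp (hlt.trans_le (Cardinal.nat_lt_aleph0 n).le)
      set d : ℕ := Module.finrank ℂ (X ⧸ R) with hd
      have hdn : d < n := by
        have := Module.finrank_eq_rank ℂ (X ⧸ R)
        rw [← this] at hlt
        exact_mod_cast hlt
      set bQ : Basis (Fin d) ℂ (X ⧸ R) := Module.finBasis ℂ (X ⧸ R) with hbQ
      have hvex : ∀ i : Fin d, ∃ x : X, R.mkQ x = bQ i := fun i => R.mkQ_surjective (bQ i)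
      choose v hv using hvex
      set Glin : ↥N →ₗ[ℂ] X :=
        bN.constr ℂ (fun j : Fin n => if h : (j : ℕ) < d then v ⟨j, h⟩ else 0) with hGlin
      set B : X →L[ℂ] X :=
        A + (LinearMap.toContinuousLinearMap Glin).comp π with hB
      have hBapp : ∀ x, B x = A x + Glin (π x) := fun x => rfl
      have hB1 : B = 1 + (K + (LinearMap.toContinuousLinearMap Glin).comp π) := by
        rw [hB, hAdef]; abel
      have hBC : IsCompactOperator
          ⇑(K + (LinearMap.toContinuousLinearMap Glin).comp π) := by
        have h2 : IsCompactOperator ⇑((LinearMap.toContinuousLinearMap Glin).comp π) :=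
          aux_compact_of_factor _ π
        have := hK.add h2
        exact this
      have hsurj : Function.Surjective ⇑B := by
        intro y
        set c : Fin d → ℂ := bQ.equivFun (R.mkQ y) with hc
        set uN : ↥N := ∑ i : Fin d, c i • bN (Fin.castLE hdn.le i) with huN
        have hGu : Glin uN = ∑ i : Fin d, c i • v i := by
          rw [huN, map_sum]
          refine Finset.sum_congr rfl fun i _ => ?_
          rw [map_smul, hGlin, Basis.constr_basis]
          congr 1
          rw [dif_pos (show ((Fin.castLE hdn.le i : Fin n) : ℕ) < d from i.2)]
          exact congrArg v (Fin.ext rfl)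
        have hyR : y - Glin uN ∈ R := by
          rw [← Submodule.Quotient.mk_eq_zero, ← Submodule.mkQ_apply, map_sub, hGu, map_sum]
          have : R.mkQ y = ∑ i : Fin d, c i • bQ i := by
            conv_lhs => rw [← bQ.sum_equivFun (R.mkQ y)]
          rw [this]
          simp only [map_smul, hv]
          simp
        obtain ⟨z, hz⟩ := hyR
        refine ⟨z - ↑(π z) + ↑uN, ?_⟩
        rw [hBapp]
        have hA : A (z - ↑(π z) + ↑uN) = y - Glin uN := by
          rw [map_add, map_sub]
          have h1 : A ↑(π z) = 0 := LinearMap.mem_ker.mp (SetLike.coe_mem (π z))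
          have h2 : A ↑uN = 0 := LinearMap.mem_ker.mp (SetLike.coe_mem uN)
          rw [h1, h2, show A z = y - Glin uN from hz]; abel
        have hπx : π (z - ↑(π z) + ↑uN) = uN := by
          rw [map_add, map_sub, hπ (π z), hπ uN]; abel
        rw [hA, hπx]; abel
      have hinj := aux_surj_inj (C := K + (LinearMap.toContinuousLinearMap Glin).comp π)
        hBC (by rw [← hB1]; exact hsurj)
      rw [← hB1] at hinj
      have hj0 : B ↑(bN ⟨d, hdn⟩) = 0 := by
        rw [hBapp]
        have h1 : A ↑(bN ⟨d, hdn⟩) = 0 := LinearMap.mem_ker.mp (SetLike.coe_mem _)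
        rw [h1, hπ (bN ⟨d, hdn⟩), hGlin, Basis.constr_basis, dif_neg (by simp)]
        simp
      have := hinj (a₁ := ↑(bN ⟨d, hdn⟩)) (a₂ := 0) (by rw [hj0, map_zero])
      have hne := bN.ne_zero ⟨d, hdn⟩
      rw [show ((0 : X) = ((0 : ↥N) : X)) from rfl] at this
      exact hne (Subtype.coe_injective this)
    obtain ⟨s, hscard, hsind⟩ :=
      le_rank_iff_exists_linearIndependent_finset.mp hrank
    have hvex : ∀ q : X ⧸ R, ∃ x : X, R.mkQ x = q := fun q => R.mkQ_surjective q
    choose flift hlift using hvex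
    have e : Fin n ≃ {x // x ∈ s} := (Finset.equivFinOfCardEq hscard).symm
    set w : Fin n → X ⧸ R := fun j => ((e j : X ⧸ R)) with hwdef
    have hw : LinearIndependent ℂ w := hsind.comp (fun j => e j) e.injective
    refine ⟨fun j => flift (w j), ?_⟩
    have : (fun j => R.mkQ (flift (w j))) = w := funext fun j => hlift (w j)
    rw [this]
    exact hw
  obtain ⟨v, hv⟩ := hcase
  set Glin : ↥N →ₗ[ℂ] X := bN.constr ℂ v with hGlin
  set K₁ : X →L[ℂ] X := K + (LinearMap.toContinuousLinearMap Glin).comp π with hK₁def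
  have hB1 : (1 + K₁ : X →L[ℂ] X) = A + (LinearMap.toContinuousLinearMap Glin).comp π := by
    rw [hK₁def, hAdef]; abel
  have hBapp : ∀ x, (1 + K₁ : X →L[ℂ] X) x = A x + Glin (π x) := by
    intro x; rw [hB1]; rfl
  have hK₁c : IsCompactOperator ⇑K₁ := by
    have h2 : IsCompactOperator ⇑((LinearMap.toContinuousLinearMap Glin).comp π) :=
      aux_compact_of_factor _ π
    have := hK.add h2
    exact this
  have hinj : Function.Injective ⇑(1 + K₁ : X →L[ℂ] X) := by
    have h0 : ∀ x, (1 + K₁ : X →L[ℂ] X) x = 0 → x = 0 := by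
      intro x hx
      rw [hBapp] at hx
      have hGx : Glin (π x) = -(A x) := eq_neg_of_add_eq_zero_right hx
      have hmk : ∑ i : Fin n, bN.equivFun (π x) i • R.mkQ (v i) = 0 := by
        have h1 : R.mkQ (Glin (π x)) = 0 := by
          rw [hGx, map_neg, Submodule.mkQ_apply,
            (Submodule.Quotient.mk_eq_zero R (x := A x)).mpr ⟨x, rfl⟩, neg_zero]
        rw [hGlin, Basis.constr_apply_fintype, map_sum] at h1
        simpa only [map_smul] using h1
      have hcoef : ∀ i, bN.equivFun (π x) i = 0 :=
        Fintype.linearIndependent_iff.mp hv _ hmk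
      have hπx : π x = 0 := by
        have : bN.equivFun (π x) = 0 := funext hcoef
        exact (LinearEquiv.map_eq_zero_iff bN.equivFun).mp this
      have hAx : A x = 0 := by
        rw [hπx, map_zero, add_zero] at hx
        exact hx
      have hxN : x ∈ N := LinearMap.mem_ker.mpr hAx
      have := hπ ⟨x, hxN⟩
      rw [show ((⟨x, hxN⟩ : ↥N) : X) = x from rfl, hπx] at this
      exact congrArg Subtype.val this.symm
    intro a b hab
    have : (1 + K₁ : X →L[ℂ] X) (a - b) = 0 := by rw [map_sub, hab, sub_self]
    exact sub_eq_zero.mp (h0 _ this)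
  have hsurj := aux_inj_surj (C := K₁) hK₁c hinj
  refine ⟨K₁, M, hK₁c, ⟨hinj, hsurj⟩, hMc, hMfd, ?_⟩
  intro x hxM
  have hπx : π x = 0 := LinearMap.mem_ker.mp hxM
  have : K₁ x = K x + Glin (π x) := rfl
  rw [this, hπx, map_zero, add_zero]

/-- The forward direction: from a semi-compact perturbation witness produce the full data. -/
lemma aux_forward [CompleteSpace X] {lam mu : Submodule ℂ X}
    (hlamc : IsClosed (lam : Set X))
    {K : X →L[ℂ] X} (hK : IsCompactOperator ⇑K)
    (hmap : Submodule.map ((1 + K : X →L[ℂ] X) : X →ₗ[ℂ] X) lam ≤ mu) :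
    ∃ (lam₁ mu₁ : Submodule ℂ X) (K₁ : X →L[ℂ] X),
      lam₁ ≤ lam ∧ mu₁ ≤ mu ∧
      IsClosed (lam₁ : Set X) ∧ IsClosed (mu₁ : Set X) ∧
      IsCompactOperator ⇑K₁ ∧
      FiniteDimensional ℂ (↥lam ⧸ lam₁.comap lam.subtype) ∧
      Submodule.map ((1 + K₁ : X →L[ℂ] X) : X →ₗ[ℂ] X) lam₁ = mu₁ ∧
      Function.Bijective ⇑(1 + K₁ : X →L[ℂ] X) := by
  obtain ⟨K₁, M, hK₁c, hbij, hMc, hMfd, hagree⟩ := aux_bij hK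
  set B : X →L[ℂ] X := 1 + K₁ with hB
  set lam₁ : Submodule ℂ X := lam ⊓ M with hlam₁
  set mu₁ : Submodule ℂ X := Submodule.map (B : X →ₗ[ℂ] X) lam₁ with hmu₁
  have hBK : ∀ x ∈ M, B x = (1 + K : X →L[ℂ] X) x := by
    intro x hx
    simp only [hB, ContinuousLinearMap.add_apply, ContinuousLinearMap.one_apply]
    rw [hagree x hx]
  have hle : lam₁ ≤ lam := inf_le_left
  have hmule : mu₁ ≤ mu := by
    rintro _ ⟨x, ⟨hxl, hxM⟩, rfl⟩
    rw [ContinuousLinearMap.coe_coe, hBK x hxM]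
    exact hmap ⟨x, hxl, rfl⟩
  have hlam₁c : IsClosed (lam₁ : Set X) := by
    have : (lam₁ : Set X) = (lam : Set X) ∩ (M : Set X) := rfl
    rw [this]
    exact hlamc.inter hMc
  -- B as a continuous linear equivalence
  have hker : LinearMap.ker (B : X →ₗ[ℂ] X) = ⊥ := LinearMap.ker_eq_bot.mpr hbij.1
  have hrange : LinearMap.range (B : X →ₗ[ℂ] X) = ⊤ := LinearMap.range_eq_top.mpr hbij.2
  let e : X ≃L[ℂ] X := ContinuousLinearEquiv.ofBijective B hker hrange
  have he : ∀ x, e x = B x := fun x => rfl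
  have hmu₁c : IsClosed (mu₁ : Set X) := by
    have hset : (mu₁ : Set X) = ⇑(e.symm) ⁻¹' (lam₁ : Set X) := by
      ext y
      constructor
      · rintro ⟨x, hx, rfl⟩
        have : e.symm (B x) = x := by rw [← he]; exact e.symm_apply_apply x
        simpa [this] using hx
      · intro hy
        refine ⟨e.symm y, hy, ?_⟩
        rw [ContinuousLinearMap.coe_coe, ← he]
        exact e.apply_symm_apply y
    rw [hset]
    exact hlam₁c.preimage e.symm.continuous
  have hfd : FiniteDimensional ℂ (↥lam ⧸ lam₁.comap lam.subtype) := by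
    set f : ↥lam →ₗ[ℂ] X ⧸ M := M.mkQ.comp lam.subtype with hf
    have hkerf : LinearMap.ker f = lam₁.comap lam.subtype := by
      ext x
      simp only [hf, LinearMap.mem_ker, LinearMap.comp_apply, Submodule.mkQ_apply,
        Submodule.Quotient.mk_eq_zero, Submodule.mem_comap, hlam₁, Submodule.mem_inf,
        Submodule.subtype_apply]
      exact ⟨fun h => ⟨x.2, h⟩, fun h => h.2⟩
    have hinj : Function.Injective ((lam₁.comap lam.subtype).liftQ f hkerf.ge) := by
      rw [← LinearMap.ker_eq_bot]
      exact Submodule.ker_liftQ_eq_bot _ _ _ hkerf.le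
    exact FiniteDimensional.of_injective _ hinj
  exact ⟨lam₁, mu₁, K₁, hle, hmule, hlam₁c, hmu₁c, hK₁c, hfd, rfl, hbij⟩

open Module in
/-- The backward direction. -/
lemma aux_backward [CompleteSpace X] {lam mu : Submodule ℂ X}
    (hlamc : IsClosed (lam : Set X))
    {lam₁ mu₁ : Submodule ℂ X} {K₁ : X →L[ℂ] X}
    (h1 : lam₁ ≤ lam) (h2 : mu₁ ≤ mu) (h3 : IsClosed (lam₁ : Set X))
    (hK₁ : IsCompactOperator ⇑K₁)
    (hfd : FiniteDimensional ℂ (↥lam ⧸ lam₁.comap lam.subtype))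
    (hmap : Submodule.map ((1 + K₁ : X →L[ℂ] X) : X →ₗ[ℂ] X) lam₁ = mu₁) :
    SCPerturb lam mu := by
  haveI : CompleteSpace ↥lam := hlamc.completeSpace_coe
  set lam' : Submodule ℂ ↥lam := lam₁.comap lam.subtype with hlam'
  have hlam'c : IsClosed (lam' : Set ↥lam) := h3.preimage continuous_subtype_val
  haveI : FiniteDimensional ℂ (↥lam ⧸ lam') := hfd
  obtain ⟨π, hπ⟩ := Submodule.ClosedComplemented.of_quotient_finiteDimensional hlam'c
  set f : ↥lam →L[ℂ] X :=
    lam.subtypeL - (lam.subtypeL.comp (lam'.subtypeL.comp π)) with hfdef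
  have hfval : ∀ x : ↥lam, f x = (x : X) - ((π x : ↥lam) : X) := fun x => rfl
  have hf0 : ∀ x : ↥lam, x ∈ lam' → f x = 0 := by
    intro x hx
    rw [hfval]
    have : π x = ⟨x, hx⟩ := hπ ⟨x, hx⟩
    rw [this]
    simp
  haveI hrangefd : FiniteDimensional ℂ ↥(LinearMap.range (f : ↥lam →ₗ[ℂ] X)) := by
    set φ : (↥lam ⧸ lam') →ₗ[ℂ] X :=
      lam'.liftQ (f : ↥lam →ₗ[ℂ] X) (fun x hx => LinearMap.mem_ker.mpr (hf0 x hx)) with hφ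
    have hre : LinearMap.range (f : ↥lam →ₗ[ℂ] X) = LinearMap.range φ := by
      rw [hφ, Submodule.range_liftQ]
    rw [hre]
    infer_instance
  -- build the finite-rank extension g with range inside W
  set W : Submodule ℂ X := LinearMap.range (f : ↥lam →ₗ[ℂ] X) with hW
  set bW : Basis (Fin (finrank ℂ ↥W)) ℂ ↥W := finBasis ℂ ↥W with hbW
  set fi : Fin (finrank ℂ ↥W) → (↥lam →L[ℂ] ℂ) := fun i =>
    (LinearMap.toContinuousLinearMap (bW.coord i)).comp
      (f.codRestrict W fun x => LinearMap.mem_range_self _ x) with hfi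
  choose gi hgf hnorm using fun i => exists_extension_norm_eq lam (fi i)
  set v : X →L[ℂ] ↥W :=
    ((bW.equivFunL.symm : (Fin (finrank ℂ ↥W) → ℂ) →L[ℂ] ↥W)).comp
      (ContinuousLinearMap.pi gi) with hv
  set g : X →L[ℂ] X := W.subtypeL.comp v with hg
  have hgval : ∀ x : ↥lam, g (x : X) = f x := by
    intro x
    have : v (x : X) = f.codRestrict W (fun x => LinearMap.mem_range_self _ x) x := by
      rw [hv]
      simp only [ContinuousLinearMap.comp_apply]
      apply bW.equivFunL.symm_apply_eq.mpr
      funext i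
      rw [ContinuousLinearMap.pi_apply, hgf i x]
      simp only [hfi, ContinuousLinearMap.comp_apply, LinearMap.coe_toContinuousLinearMap',
        Basis.coord_apply]
      rfl
    rw [hg, ContinuousLinearMap.comp_apply, this]
    rfl
  have hgc : IsCompactOperator ⇑g := aux_compact_of_factor W.subtypeL v
  refine ⟨K₁ - g - K₁.comp g, ?_, ?_⟩
  · have hco : ⇑(K₁ - g - K₁.comp g) = (⇑K₁ - ⇑g) - (⇑K₁ ∘ ⇑g) := by
      funext x; simp
    rw [hco]
    exact (hK₁.sub hgc).sub (hgc.continuous_comp K₁.continuous)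
  · rintro _ ⟨x, hx, rfl⟩
    have hgx : g x = x - ((π ⟨x, hx⟩ : ↥lam) : X) := by
      have := hgval ⟨x, hx⟩
      rw [hfval] at this
      exact this
    set wv : X := ((π ⟨x, hx⟩ : ↥lam) : X) with hwv
    have hwmem : wv ∈ lam₁ := (π ⟨x, hx⟩).2
    have hkey : (1 + (K₁ - g - K₁.comp g) : X →L[ℂ] X) x = (1 + K₁ : X →L[ℂ] X) wv := by
      simp only [ContinuousLinearMap.add_apply, ContinuousLinearMap.sub_apply,
        ContinuousLinearMap.one_apply, ContinuousLinearMap.comp_apply]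
      rw [hgx]
      rw [show wv = x - (x - wv) from by abel]
      rw [map_sub K₁ x (x - wv)]
      abel
    rw [ContinuousLinearMap.coe_coe, hkey]
    exact h2 (hmap ▸ ⟨wv, hwmem, rfl⟩)


end Aux

/-- Characterization of right semi-compact perturbations:
`λ ∼^{sc} μ` iff there are closed subspaces `λ₁ ≤ λ` of finite codimension in
`λ` and `μ₁ ≤ μ` with `(I+K₁)λ₁ = μ₁` for some compact `K₁`; moreover the data
can be chosen so that `I + K₁` is bijective (hence, by the Banach inverse
mapping theorem, a bounded linear isomorphism restricting to an isomorphism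
`λ₁ ≃ μ₁`). -/
theorem scPerturb_iff_finite_codim {X : Type*} [NormedAddCommGroup X]
    [NormedSpace ℂ X] [CompleteSpace X] (lam mu : Submodule ℂ X)
    (hlamc : IsClosed (lam : Set X)) (hmuc : IsClosed (mu : Set X)) :
    (SCPerturb lam mu ↔
      ∃ (lam₁ mu₁ : Submodule ℂ X) (K₁ : X →L[ℂ] X),
        lam₁ ≤ lam ∧ mu₁ ≤ mu ∧
        IsClosed (lam₁ : Set X) ∧ IsClosed (mu₁ : Set X) ∧
        IsCompactOperator ⇑K₁ ∧
        FiniteDimensional ℂ (↥lam ⧸ lam₁.comap lam.subtype) ∧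
        Submodule.map ((1 + K₁ : X →L[ℂ] X) : X →ₗ[ℂ] X) lam₁ = mu₁) ∧
    (SCPerturb lam mu →
      ∃ (lam₁ mu₁ : Submodule ℂ X) (K₁ : X →L[ℂ] X),
        lam₁ ≤ lam ∧ mu₁ ≤ mu ∧
        IsClosed (lam₁ : Set X) ∧ IsClosed (mu₁ : Set X) ∧
        IsCompactOperator ⇑K₁ ∧
        FiniteDimensional ℂ (↥lam ⧸ lam₁.comap lam.subtype) ∧
        Submodule.map ((1 + K₁ : X →L[ℂ] X) : X →ₗ[ℂ] X) lam₁ = mu₁ ∧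
        Function.Bijective ⇑(1 + K₁ : X →L[ℂ] X)) := by
  have main : SCPerturb lam mu →
      ∃ (lam₁ mu₁ : Submodule ℂ X) (K₁ : X →L[ℂ] X),
        lam₁ ≤ lam ∧ mu₁ ≤ mu ∧
        IsClosed (lam₁ : Set X) ∧ IsClosed (mu₁ : Set X) ∧
        IsCompactOperator ⇑K₁ ∧
        FiniteDimensional ℂ (↥lam ⧸ lam₁.comap lam.subtype) ∧
        Submodule.map ((1 + K₁ : X →L[ℂ] X) : X →ₗ[ℂ] X) lam₁ = mu₁ ∧
        Function.Bijective ⇑(1 + K₁ : X →L[ℂ] X) := by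
    rintro ⟨K, hK, hmap⟩
    exact aux_forward hlamc hK hmap
  refine ⟨⟨fun h => ?_, ?_⟩, main⟩
  · obtain ⟨lam₁, mu₁, K₁, a1, a2, a3, a4, a5, a6, a7, a8⟩ := main h
    exact ⟨lam₁, mu₁, K₁, a1, a2, a3, a4, a5, a6, a7⟩
  · rintro ⟨lam₁, mu₁, K₁, a1, a2, a3, a4, a5, a6, a7⟩
    exact aux_backward hlamc a1 a2 a3 a5 a6 a7
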